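/- Let M be a Riemann-Roch monomial ideal of genus g with canonical monomial x^K. Then degree(x^K) = 2g − 2 and rank(x^K) = g − 2. -/
import Mathlib


open Finset

/-- A set of exponent vectors is a monomial ideal iff it is upward closed. -/
def UpClosed {m : ℕ} (M : Set (Fin m → ℕ)) : Prop :=
  ∀ u ∈ M, ∀ v : Fin m → ℕ, (∀ i, u i ≤ v i) → v ∈ M

/-- Artinian: a power of each variable lies in `M`. -/
def ArtinianMono {m : ℕ} (M : Set (Fin m → ℕ)) : Prop :=
  ∀ i : Fin m, ∃ k : ℕ, (fun j => if j = i then k else 0) ∈ M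

/-- Socle monomials: `x^c ∉ M` with `x_i·x^c ∈ M` for all `i`. -/
def MonSoc {m : ℕ} (M : Set (Fin m → ℕ)) : Set (Fin m → ℕ) :=
  {c | c ∉ M ∧ ∀ i : Fin m, (fun j => c j + if j = i then 1 else 0) ∈ M}

/-- `degree⁺(u)`: the sum of the positive coordinates of `u`. -/
def degP {m : ℕ} (w : Fin m → ℤ) : ℤ := ∑ i, max (w i) 0

/-- total degree -/
def degZ {m : ℕ} (w : Fin m → ℤ) : ℤ := ∑ i, w i

def zvec {m : ℕ} (b : Fin m → ℕ) : Fin m → ℤ := fun i => (b i : ℤ)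

/-- rank of a Laurent monomial `x^b` with respect to `M`. -/
noncomputable def rnk {m : ℕ} (M : Set (Fin m → ℕ)) (b : Fin m → ℤ) : ℤ :=
  sInf ((fun c => degP (b - zvec c)) '' MonSoc M) - 1

/-- `M` is level of genus `g`: all socle monomials have degree `g - 1`. -/
def LevelOf {m : ℕ} (M : Set (Fin m → ℕ)) (g : ℤ) : Prop :=
  ∀ c ∈ MonSoc M, degZ (zvec c) = g - 1

/-- Reflection invariance with canonical monomial `x^K`. -/
def ReflInv {m : ℕ} (M : Set (Fin m → ℕ)) (K : Fin m → ℕ) : Prop :=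
  ∀ c ∈ MonSoc M, (∀ i, c i ≤ K i) ∧ (fun i => K i - c i) ∈ MonSoc M

lemma socle_nonempty {m : ℕ} (M : Set (Fin m → ℕ)) (hup : UpClosed M)
    (hart : ArtinianMono M) (hproper : (0 : Fin m → ℕ) ∉ M) :
    (MonSoc M).Nonempty := by
  choose k hk using hart
  have hbound : ∀ c : Fin m → ℕ, c ∉ M → ∀ i, c i ≤ k i := by
    intro c hc i
    by_contra h
    push_neg at h
    refine hc (hup _ (hk i) c (fun j => ?_))
    by_cases hji : j = i
    · subst hji; simp; omega
    · simp [hji]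
  set T : Set ℕ := {n | ∃ c : Fin m → ℕ, c ∉ M ∧ ∑ i, c i = n} with hT
  have hTne : T.Nonempty := ⟨0, 0, hproper, by simp⟩
  have hTbdd : BddAbove T := by
    refine ⟨∑ i, k i, ?_⟩
    rintro n ⟨c, hc, rfl⟩
    exact Finset.sum_le_sum (fun i _ => hbound c hc i)
  obtain ⟨c, hc, hsum⟩ := Nat.sSup_mem hTne hTbdd
  refine ⟨c, hc, fun i => ?_⟩
  by_contra h
  have : (∑ j, (c j + if j = i then 1 else 0)) ∈ T := ⟨_, h, rfl⟩
  have hle := le_csSup hTbdd this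
  rw [Finset.sum_add_distrib, hsum] at hle
  simp at hle

/-- the canonical monomial has degree `2g - 2` and rank `g - 2`. -/
theorem stmt4 {m : ℕ} (M : Set (Fin m → ℕ)) (g : ℤ) (K : Fin m → ℕ)
    (hup : UpClosed M) (hart : ArtinianMono M) (hproper : (0 : Fin m → ℕ) ∉ M)
    (hlev : LevelOf M g) (hrefl : ReflInv M K) :
    degZ (zvec K) = 2 * g - 2 ∧ rnk M (zvec K) = g - 2 := by
  obtain ⟨c, hc⟩ := socle_nonempty M hup hart hproper
  obtain ⟨hle, hrc⟩ := hrefl c hc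
  have hdeg : degZ (zvec K) = 2 * g - 2 := by
    have h1 := hlev c hc
    have h2 := hlev _ hrc
    simp only [degZ, zvec] at h1 h2 ⊢
    have : ∀ i, ((K i - c i : ℕ) : ℤ) = (K i : ℤ) - (c i : ℤ) := fun i =>
      Int.ofNat_sub (hle i)
    rw [Finset.sum_congr rfl (fun i _ => this i), Finset.sum_sub_distrib, h1] at h2
    linarith
  refine ⟨hdeg, ?_⟩
  have himg : (fun c => degP (zvec K - zvec c)) '' MonSoc M = {g - 1} := by
    ext n
    constructor
    · rintro ⟨c', hc', rfl⟩
      have hle' := (hrefl c' hc').1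
      have h1 := hlev c' hc'
      simp only [degP, degZ, zvec, Pi.sub_apply] at h1 hdeg ⊢
      have : ∀ i ∈ Finset.univ, max ((K i : ℤ) - c' i) 0 = (K i : ℤ) - c' i :=
        fun i _ => max_eq_left (by have := hle' i; omega)
      rw [Finset.sum_congr rfl this, Finset.sum_sub_distrib, h1, hdeg]
      simp only [Set.mem_singleton_iff]
      ring
    · rintro rfl
      refine ⟨c, hc, ?_⟩
      have h1 := hlev c hc
      simp only [degP, degZ, zvec, Pi.sub_apply] at h1 hdeg ⊢
      have : ∀ i ∈ Finset.univ, max ((K i : ℤ) - c i) 0 = (K i : ℤ) - c i :=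
        fun i _ => max_eq_left (by have := hle i; omega)
      rw [Finset.sum_congr rfl this, Finset.sum_sub_distrib, h1, hdeg]
      ring
  rw [rnk, himg, csInf_singleton]
  ring
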